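/- Let (U₁, U₂) be an acyclic split of an implicational base I with closure system F; let F₁ be the closure system of I[U₁], F₂ of I[U₂], and let M, M₁, M₂ denote the meet-irreducible elements of F, F₁, F₂ respectively. Then M = {M₁ ∪ U₂ : M₁ ∈ M₁} ∪ {C : C is a maximal extension of some M₂ ∈ M₂}, and in particular |M| ≥ |M₁| + |M₂|. -/

import Mathlib

open Finset

variable {α : Type*} [DecidableEq α]

/-- `C` is a model (closed set) of the implicational base `I`. -/
def IsModel (I : Finset (Finset α × α)) (C : Finset α) : Prop :=
  ∀ p ∈ I, p.1 ⊆ C → p.2 ∈ C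

/-- The restriction `I[X]` of an implicational base to `X`. -/
def restrictIB (I : Finset (Finset α × α)) (X : Finset α) : Finset (Finset α × α) :=
  I.filter (fun p => p.1 ⊆ X ∧ p.2 ∈ X)

/-- `I` is an implicational base over ground set `U`: premises are nonempty
and all elements lie in `U`. -/
def BaseOver (I : Finset (Finset α × α)) (U : Finset α) : Prop :=
  ∀ p ∈ I, p.1 ⊆ U ∧ p.2 ∈ U ∧ p.1.Nonempty

/-- `(U₁, U₂)` is a split of `I` over `U`. -/
def IsSplit (I : Finset (Finset α × α)) (U U₁ U₂ : Finset α) : Prop :=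
  U₁ ∪ U₂ = U ∧ Disjoint U₁ U₂ ∧ U₁.Nonempty ∧ U₂.Nonempty ∧
  ∀ p ∈ I, p.1 ⊆ U₁ ∨ p.1 ⊆ U₂

/-- An acyclic split: every cross implication has its premise in `U₁`. -/
def IsAcyclicSplit (I : Finset (Finset α × α)) (U U₁ U₂ : Finset α) : Prop :=
  IsSplit I U U₁ U₂ ∧
  ∀ p ∈ I, ¬ (p.1 ⊆ U₁ ∧ p.2 ∈ U₁) → ¬ (p.1 ⊆ U₂ ∧ p.2 ∈ U₂) → p.1 ⊆ U₁

/-- Two elements lie together in the premise of some implication. -/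
def PremiseStep (I : Finset (Finset α × α)) (u v : α) : Prop :=
  ∃ p ∈ I, u ∈ p.1 ∧ v ∈ p.1

/-- Every pair of elements of `S` is joined by a premise-path. -/
def PremiseConnectedOn (I : Finset (Finset α × α)) (S : Finset α) : Prop :=
  ∀ u ∈ S, ∀ v ∈ S, Relation.ReflTransGen (PremiseStep I) u v

/-- `C` is a premise-connected component of `I` over `U`. -/
def IsComponent (I : Finset (Finset α × α)) (U C : Finset α) : Prop :=
  C ⊆ U ∧ PremiseConnectedOn I C ∧
  ∀ C' : Finset α, C ⊆ C' → C' ⊆ U → PremiseConnectedOn I C' → C' = C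

/-- The closure system (family of models included in `U`) of `I`. -/
def Fam (I : Finset (Finset α × α)) (U : Finset α) : Set (Finset α) :=
  {C | C ⊆ U ∧ IsModel I C}

/-- `M` is meet-irreducible in the closure system `F` with top `U`. -/
def MeetIrred (F : Set (Finset α)) (U M : Finset α) : Prop :=
  M ∈ F ∧ M ≠ U ∧ ∀ A ∈ F, ∀ B ∈ F, M = A ∩ B → M = A ∨ M = B

-- helpers
lemma mem_restrictIB {I : Finset (Finset α × α)} {X : Finset α} {p : Finset α × α} :
    p ∈ restrictIB I X ↔ p ∈ I ∧ p.1 ⊆ X ∧ p.2 ∈ X := by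
  simp [restrictIB, Finset.mem_filter]

lemma model_inter {I : Finset (Finset α × α)} {X C : Finset α} (hC : IsModel I C) :
    IsModel (restrictIB I X) (C ∩ X) := by
  intro p hp hsub
  rw [mem_restrictIB] at hp
  exact Finset.mem_inter.mpr
    ⟨hC p hp.1 (hsub.trans Finset.inter_subset_left), hp.2.2⟩

lemma un_inter₁ {U₁ U₂ X Y : Finset α} (hd : Disjoint U₁ U₂) (hX : X ⊆ U₁) (hY : Y ⊆ U₂) :
    (X ∪ Y) ∩ U₁ = X := by
  ext a
  simp only [Finset.mem_inter, Finset.mem_union]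
  constructor
  · rintro ⟨h | h, h1⟩
    · exact h
    · exact absurd h1 (Finset.disjoint_right.mp hd (hY h))
  · exact fun ha => ⟨Or.inl ha, hX ha⟩

lemma un_inter₂ {U₁ U₂ X Y : Finset α} (hd : Disjoint U₁ U₂) (hX : X ⊆ U₁) (hY : Y ⊆ U₂) :
    (X ∪ Y) ∩ U₂ = Y := by
  rw [Finset.union_comm]; exact un_inter₁ hd.symm hY hX

lemma decompU {U U₁ U₂ A : Finset α} (hU : U₁ ∪ U₂ = U) (hA : A ⊆ U) :
    A = (A ∩ U₁) ∪ (A ∩ U₂) := by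
  rw [← Finset.inter_union_distrib_left, hU, Finset.inter_eq_left.mpr hA]

lemma union_inter_union {X Y Z : Finset α} : (X ∪ Y) ∩ (X ∪ Z) = X ∪ (Y ∩ Z) := by
  ext a; simp only [Finset.mem_inter, Finset.mem_union]; tauto

lemma inter_inter {A B X : Finset α} : (A ∩ B) ∩ X = (A ∩ X) ∩ (B ∩ X) := by
  ext a; simp only [Finset.mem_inter]; tauto

lemma tri {I : Finset (Finset α × α)} {U U₁ U₂ : Finset α}
    (hI : BaseOver I U) (h : IsAcyclicSplit I U U₁ U₂) {p : Finset α × α} (hp : p ∈ I) :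
    (p.1 ⊆ U₁ ∧ p.2 ∈ U₁) ∨ (p.1 ⊆ U₂ ∧ p.2 ∈ U₂) ∨ (p.1 ⊆ U₁ ∧ p.2 ∈ U₂) := by
  by_cases h1 : p.1 ⊆ U₁ ∧ p.2 ∈ U₁
  · exact Or.inl h1
  by_cases h2 : p.1 ⊆ U₂ ∧ p.2 ∈ U₂
  · exact Or.inr (Or.inl h2)
  have hp1 := h.2 p hp h1 h2
  have hp2 : p.2 ∈ U₁ ∪ U₂ := h.1.1 ▸ (hI p hp).2.1
  rcases Finset.mem_union.mp hp2 with h' | h'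
  · exact absurd ⟨hp1, h'⟩ h1
  · exact Or.inr (Or.inr ⟨hp1, h'⟩)

lemma glue {I : Finset (Finset α × α)} {U U₁ U₂ C₁ A₂ : Finset α}
    (hI : BaseOver I U) (h : IsAcyclicSplit I U U₁ U₂)
    (hC₁ : C₁ ⊆ U₁) (hm₁ : IsModel (restrictIB I U₁) C₁)
    (hA₂ : A₂ ⊆ U₂) (hm₂ : IsModel (restrictIB I U₂) A₂)
    (hcross : ∀ p ∈ I, p.1 ⊆ U₁ → p.2 ∈ U₂ → p.1 ⊆ C₁ → p.2 ∈ A₂) :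
    IsModel I (C₁ ∪ A₂) := by
  have hd := h.1.2.1
  intro p hp hsub
  have key1 : p.1 ⊆ U₁ → p.1 ⊆ C₁ := fun h1 a ha => by
    rcases Finset.mem_union.mp (hsub ha) with h' | h'
    · exact h'
    · exact absurd (h1 ha) (Finset.disjoint_right.mp hd (hA₂ h'))
  rcases tri hI h hp with ⟨h1, h2⟩ | ⟨h1, h2⟩ | ⟨h1, h2⟩
  · exact Finset.mem_union_left _ (hm₁ p (mem_restrictIB.mpr ⟨hp, h1, h2⟩) (key1 h1))
  · have : p.1 ⊆ A₂ := fun a ha => by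
      rcases Finset.mem_union.mp (hsub ha) with h' | h'
      · exact absurd (h1 ha) (Finset.disjoint_left.mp hd (hC₁ h'))
      · exact h'
    exact Finset.mem_union_right _ (hm₂ p (mem_restrictIB.mpr ⟨hp, h1, h2⟩) this)
  · exact Finset.mem_union_right _ (hcross p hp h1 h2 (key1 h1))

lemma empty_model {I : Finset (Finset α × α)} {U : Finset α} (hI : BaseOver I U)
    (X : Finset α) : IsModel (restrictIB I X) (∅ : Finset α) := by
  intro p hp hsub
  exact absurd (Finset.subset_empty.mp hsub)
    (Finset.nonempty_iff_ne_empty.mp (hI p (mem_restrictIB.mp hp).1).2.2)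

lemma U₂_model {I : Finset (Finset α × α)} {U₂ : Finset α} :
    IsModel (restrictIB I U₂) U₂ := fun p hp _ => (mem_restrictIB.mp hp).2.2

lemma claim1 {I : Finset (Finset α × α)} {U U₁ U₂ : Finset α}
    (hI : BaseOver I U) (h : IsAcyclicSplit I U U₁ U₂) {M₁ : Finset α}
    (hM : MeetIrred (Fam (restrictIB I U₁) U₁) U₁ M₁) :
    MeetIrred (Fam I U) U (M₁ ∪ U₂) := by
  have hU := h.1.1
  have hd := h.1.2.1
  have hU₁ : U₁ ⊆ U := hU ▸ Finset.subset_union_left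
  have hU₂ : U₂ ⊆ U := hU ▸ Finset.subset_union_right
  obtain ⟨⟨hM₁U, hM₁m⟩, hMne, hirr⟩ := hM
  refine ⟨⟨Finset.union_subset (hM₁U.trans hU₁) hU₂,
    glue hI h hM₁U hM₁m (Finset.Subset.refl _) U₂_model (fun p _ _ hp2 _ => hp2)⟩, ?_, ?_⟩
  · intro hEq
    apply hMne
    have h2 : (M₁ ∪ U₂) ∩ U₁ = U ∩ U₁ := by rw [hEq]
    rwa [un_inter₁ hd hM₁U (Finset.Subset.refl _), Finset.inter_eq_right.mpr hU₁] at h2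
  · intro A hA B hB hEq
    have hA₁ : A ∩ U₁ ∈ Fam (restrictIB I U₁) U₁ :=
      ⟨Finset.inter_subset_right, model_inter hA.2⟩
    have hB₁ : B ∩ U₁ ∈ Fam (restrictIB I U₁) U₁ :=
      ⟨Finset.inter_subset_right, model_inter hB.2⟩
    have hM₁eq : M₁ = (A ∩ U₁) ∩ (B ∩ U₁) := by
      have h2 : (M₁ ∪ U₂) ∩ U₁ = (A ∩ B) ∩ U₁ := by rw [hEq]
      rw [un_inter₁ hd hM₁U (Finset.Subset.refl _), inter_inter] at h2
      exact h2
    have hU₂AB : U₂ ⊆ A ∩ B := hEq ▸ Finset.subset_union_right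
    rcases hirr _ hA₁ _ hB₁ hM₁eq with h' | h'
    · left
      rw [decompU hU hA.1, ← h',
        Finset.inter_eq_right.mpr (hU₂AB.trans Finset.inter_subset_left)]
    · right
      rw [decompU hU hB.1, ← h',
        Finset.inter_eq_right.mpr (hU₂AB.trans Finset.inter_subset_right)]

lemma claim2 {I : Finset (Finset α × α)} {U U₁ U₂ M₂ C : Finset α}
    (h : IsAcyclicSplit I U U₁ U₂)
    (hM₂ : MeetIrred (Fam (restrictIB I U₂) U₂) U₂ M₂)
    (hC : C ∈ Fam I U) (hCM : C ∩ U₂ = M₂)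
    (hmax : ∀ C' ∈ Fam I U, C' ∩ U₂ = M₂ → C ⊆ C' → C = C') :
    MeetIrred (Fam I U) U C := by
  have hU₂ : U₂ ⊆ U := h.1.1 ▸ Finset.subset_union_right
  refine ⟨hC, ?_, ?_⟩
  · rintro rfl
    apply hM₂.2.1
    rw [← hCM]
    exact Finset.inter_eq_right.mpr hU₂
  · intro A hA B hB hEq
    have hA₂ : A ∩ U₂ ∈ Fam (restrictIB I U₂) U₂ :=
      ⟨Finset.inter_subset_right, model_inter hA.2⟩
    have hB₂ : B ∩ U₂ ∈ Fam (restrictIB I U₂) U₂ :=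
      ⟨Finset.inter_subset_right, model_inter hB.2⟩
    have hMeq : M₂ = (A ∩ U₂) ∩ (B ∩ U₂) := by
      rw [← hCM, hEq]; exact inter_inter
    rcases hM₂.2.2 _ hA₂ _ hB₂ hMeq with h' | h'
    · exact Or.inl (hmax A hA h'.symm (by rw [hEq]; exact Finset.inter_subset_left))
    · exact Or.inr (hmax B hB h'.symm (by rw [hEq]; exact Finset.inter_subset_right))

lemma claim3 {I : Finset (Finset α × α)} {U U₁ U₂ : Finset α}
    (hI : BaseOver I U) (h : IsAcyclicSplit I U U₁ U₂) {M : Finset α}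
    (hM : MeetIrred (Fam I U) U M) (hsub : U₂ ⊆ M) :
    MeetIrred (Fam (restrictIB I U₁) U₁) U₁ (M ∩ U₁) ∧ M = (M ∩ U₁) ∪ U₂ := by
  have hU := h.1.1
  have hd := h.1.2.1
  have hU₁ : U₁ ⊆ U := hU ▸ Finset.subset_union_left
  have hU₂ : U₂ ⊆ U := hU ▸ Finset.subset_union_right
  have hdec : M = (M ∩ U₁) ∪ U₂ := by
    conv_lhs => rw [decompU hU hM.1.1]
    rw [Finset.inter_eq_right.mpr hsub]
  refine ⟨⟨⟨Finset.inter_subset_right, model_inter hM.1.2⟩, ?_, ?_⟩, hdec⟩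
  · intro hEq
    apply hM.2.1
    rw [hdec, hEq, hU]
  · intro A₁ hA₁ B₁ hB₁ hEq
    have hAF : A₁ ∪ U₂ ∈ Fam I U :=
      ⟨Finset.union_subset (hA₁.1.trans hU₁) hU₂,
       glue hI h hA₁.1 hA₁.2 (Finset.Subset.refl _) U₂_model (fun p _ _ hp2 _ => hp2)⟩
    have hBF : B₁ ∪ U₂ ∈ Fam I U :=
      ⟨Finset.union_subset (hB₁.1.trans hU₁) hU₂,
       glue hI h hB₁.1 hB₁.2 (Finset.Subset.refl _) U₂_model (fun p _ _ hp2 _ => hp2)⟩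
    have hMeq : M = (A₁ ∪ U₂) ∩ (B₁ ∪ U₂) := by
      rw [hdec, hEq]
      ext a; simp only [Finset.mem_inter, Finset.mem_union]; tauto
    rcases hM.2.2 _ hAF _ hBF hMeq with h' | h'
    · left
      have := congrArg (· ∩ U₁) h'
      simpa [un_inter₁ hd hA₁.1 (Finset.Subset.refl U₂)] using this
    · right
      have := congrArg (· ∩ U₁) h'
      simpa [un_inter₁ hd hB₁.1 (Finset.Subset.refl U₂)] using this

lemma claim4 {I : Finset (Finset α × α)} {U U₁ U₂ : Finset α}
    (hI : BaseOver I U) (h : IsAcyclicSplit I U U₁ U₂) {M : Finset α}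
    (hM : MeetIrred (Fam I U) U M) (hns : ¬ U₂ ⊆ M) :
    MeetIrred (Fam (restrictIB I U₂) U₂) U₂ (M ∩ U₂) ∧
    ∀ C' ∈ Fam I U, C' ∩ U₂ = M ∩ U₂ → M ⊆ C' → M = C' := by
  have hU := h.1.1
  have hd := h.1.2.1
  have hU₁ : U₁ ⊆ U := hU ▸ Finset.subset_union_left
  have hU₂ : U₂ ⊆ U := hU ▸ Finset.subset_union_right
  have hBF : (M ∩ U₁) ∪ U₂ ∈ Fam I U :=
    ⟨Finset.union_subset (Finset.inter_subset_right.trans hU₁) hU₂,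
     glue hI h Finset.inter_subset_right (model_inter hM.1.2)
       (Finset.Subset.refl _) U₂_model (fun p _ _ hp2 _ => hp2)⟩
  constructor
  · refine ⟨⟨Finset.inter_subset_right, model_inter hM.1.2⟩,
      fun he => hns (Finset.inter_eq_right.mp he), ?_⟩
    intro A₂ hA₂ B₂ hB₂ hEq
    have hcross : ∀ Z₂ : Finset α, M ∩ U₂ ⊆ Z₂ →
        ∀ p ∈ I, p.1 ⊆ U₁ → p.2 ∈ U₂ → p.1 ⊆ M ∩ U₁ → p.2 ∈ Z₂ := by
      intro Z₂ hZ p hp _ hp2 hpM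
      exact hZ (Finset.mem_inter.mpr
        ⟨hM.1.2 p hp (hpM.trans Finset.inter_subset_left), hp2⟩)
    have hAsub : M ∩ U₂ ⊆ A₂ := hEq ▸ Finset.inter_subset_left
    have hBsub : M ∩ U₂ ⊆ B₂ := hEq ▸ Finset.inter_subset_right
    have hAF : (M ∩ U₁) ∪ A₂ ∈ Fam I U :=
      ⟨Finset.union_subset (Finset.inter_subset_right.trans hU₁) (hA₂.1.trans hU₂),
       glue hI h Finset.inter_subset_right (model_inter hM.1.2) hA₂.1 hA₂.2
         (hcross A₂ hAsub)⟩
    have hBF' : (M ∩ U₁) ∪ B₂ ∈ Fam I U :=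
      ⟨Finset.union_subset (Finset.inter_subset_right.trans hU₁) (hB₂.1.trans hU₂),
       glue hI h Finset.inter_subset_right (model_inter hM.1.2) hB₂.1 hB₂.2
         (hcross B₂ hBsub)⟩
    have hMeq : M = ((M ∩ U₁) ∪ A₂) ∩ ((M ∩ U₁) ∪ B₂) := by
      rw [union_inter_union, ← hEq, ← decompU hU hM.1.1]
    rcases hM.2.2 _ hAF _ hBF' hMeq with h' | h'
    · left
      have := congrArg (· ∩ U₂) h'
      simpa [un_inter₂ hd Finset.inter_subset_right hA₂.1] using this
    · right
      have := congrArg (· ∩ U₂) h'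
      simpa [un_inter₂ hd Finset.inter_subset_right hB₂.1] using this
  · intro C' hC' hC'₂ hMC'
    have hEq : M = C' ∩ ((M ∩ U₁) ∪ U₂) := by
      rw [Finset.inter_union_distrib_left,
        Finset.inter_eq_right.mpr (Finset.inter_subset_left.trans hMC' : M ∩ U₁ ⊆ C'),
        hC'₂]
      exact decompU hU hM.1.1
    rcases hM.2.2 _ hC' _ hBF hEq with h' | h'
    · exact h'
    · exact absurd (fun a ha => h' ▸ Finset.mem_union_right _ ha) hns

lemma exists_maxext {I : Finset (Finset α × α)} {U U₁ U₂ : Finset α}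
    (hI : BaseOver I U) (h : IsAcyclicSplit I U U₁ U₂) {M₂ : Finset α}
    (hM₂ : M₂ ∈ Fam (restrictIB I U₂) U₂) :
    ∃ C ∈ Fam I U, C ∩ U₂ = M₂ ∧
      ∀ C' ∈ Fam I U, C' ∩ U₂ = M₂ → C ⊆ C' → C = C' := by
  have hU₂ : U₂ ⊆ U := h.1.1 ▸ Finset.subset_union_right
  have hmem : M₂ ∈ Fam I U := by
    refine ⟨hM₂.1.trans hU₂, ?_⟩
    have := glue hI h (Finset.empty_subset U₁) (empty_model hI U₁) hM₂.1 hM₂.2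
      (fun p hp _ _ hpe => absurd (Finset.subset_empty.mp hpe)
        (Finset.nonempty_iff_ne_empty.mp (hI p hp).2.2))
    rwa [Finset.empty_union] at this
  have hfin : {C | C ∈ Fam I U ∧ C ∩ U₂ = M₂}.Finite :=
    Set.Finite.subset U.powerset.finite_toSet (fun C hC => by simpa using hC.1.1)
  have hne : {C | C ∈ Fam I U ∧ C ∩ U₂ = M₂}.Nonempty :=
    ⟨M₂, hmem, Finset.inter_eq_left.mpr hM₂.1⟩
  obtain ⟨C, hCE, hmax⟩ := hfin.exists_maximal hne
  exact ⟨C, hCE.1, hCE.2, fun C' hC' h2 hsub => le_antisymm hsub (hmax ⟨hC', h2⟩ hsub)⟩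
/-- the meet-irreducible elements of a closure system with an
acyclic split. -/
theorem meetIrred_of_acyclic_split
    (I : Finset (Finset α × α)) (U U₁ U₂ : Finset α)
    (hI : BaseOver I U) (h : IsAcyclicSplit I U U₁ U₂) :
    {M : Finset α | MeetIrred (Fam I U) U M} =
      ((fun M₁ => M₁ ∪ U₂) ''
        {M₁ : Finset α | MeetIrred (Fam (restrictIB I U₁) U₁) U₁ M₁}) ∪
      {C : Finset α | ∃ M₂ : Finset α,
        MeetIrred (Fam (restrictIB I U₂) U₂) U₂ M₂ ∧
        C ∈ Fam I U ∧ C ∩ U₂ = M₂ ∧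
        ∀ C' ∈ Fam I U, C' ∩ U₂ = M₂ → C ⊆ C' → C = C'} ∧
    {M₁ : Finset α | MeetIrred (Fam (restrictIB I U₁) U₁) U₁ M₁}.ncard +
      {M₂ : Finset α | MeetIrred (Fam (restrictIB I U₂) U₂) U₂ M₂}.ncard ≤
      {M : Finset α | MeetIrred (Fam I U) U M}.ncard := by
  have hd := h.1.2.1
  have heq : {M : Finset α | MeetIrred (Fam I U) U M} =
      ((fun M₁ => M₁ ∪ U₂) ''
        {M₁ : Finset α | MeetIrred (Fam (restrictIB I U₁) U₁) U₁ M₁}) ∪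
      {C : Finset α | ∃ M₂ : Finset α,
        MeetIrred (Fam (restrictIB I U₂) U₂) U₂ M₂ ∧
        C ∈ Fam I U ∧ C ∩ U₂ = M₂ ∧
        ∀ C' ∈ Fam I U, C' ∩ U₂ = M₂ → C ⊆ C' → C = C'} := by
    apply Set.Subset.antisymm
    · intro M hM
      by_cases hsub : U₂ ⊆ M
      · obtain ⟨h1, h2⟩ := claim3 hI h hM hsub
        exact Or.inl ⟨M ∩ U₁, h1, h2.symm⟩
      · obtain ⟨h1, h2⟩ := claim4 hI h hM hsub
        exact Or.inr ⟨M ∩ U₂, h1, hM.1, rfl, h2⟩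
    · rintro M (⟨M₁, hM₁, rfl⟩ | ⟨M₂, hM₂, hCF, hC₂, hmax⟩)
      · exact claim1 hI h hM₁
      · exact claim2 h hM₂ hCF hC₂ hmax
  refine ⟨heq, ?_⟩
  set T₁ := {M₁ : Finset α | MeetIrred (Fam (restrictIB I U₁) U₁) U₁ M₁} with hT₁
  set T₂ := {M₂ : Finset α | MeetIrred (Fam (restrictIB I U₂) U₂) U₂ M₂} with hT₂
  set S₂ := {C : Finset α | ∃ M₂ : Finset α,
        MeetIrred (Fam (restrictIB I U₂) U₂) U₂ M₂ ∧
        C ∈ Fam I U ∧ C ∩ U₂ = M₂ ∧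
        ∀ C' ∈ Fam I U, C' ∩ U₂ = M₂ → C ⊆ C' → C = C'} with hS₂def
  have hT₁fin : T₁.Finite :=
    Set.Finite.subset U₁.powerset.finite_toSet (fun C hC => by simpa using hC.1.1)
  have hS₂fin : S₂.Finite := by
    refine Set.Finite.subset U.powerset.finite_toSet (fun C hC => ?_)
    obtain ⟨M₂, _, hCF, _⟩ := hC
    simpa using hCF.1
  have hS₁fin : ((fun M₁ => M₁ ∪ U₂) '' T₁).Finite := hT₁fin.image _
  have hdisj : Disjoint ((fun M₁ => M₁ ∪ U₂) '' T₁) S₂ := by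
    rw [Set.disjoint_left]
    rintro C ⟨M₁, hM₁, rfl⟩ ⟨M₂, hM₂, _, hC₂, _⟩
    apply hM₂.2.1
    rw [← hC₂, un_inter₂ hd hM₁.1.1 (Finset.Subset.refl U₂)]
  have hinj : Set.InjOn (fun M₁ => M₁ ∪ U₂) T₁ := by
    intro a ha b hb hab
    have := congrArg (· ∩ U₁) hab
    simpa [un_inter₁ hd ha.1.1 (Finset.Subset.refl U₂),
      un_inter₁ hd hb.1.1 (Finset.Subset.refl U₂)] using this
  have hsurj : T₂ ⊆ (fun C => C ∩ U₂) '' S₂ := by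
    intro M₂ hM₂
    obtain ⟨C, hCF, hC₂, hmax⟩ := exists_maxext hI h hM₂.1
    exact ⟨C, ⟨M₂, hM₂, hCF, hC₂, hmax⟩, hC₂⟩
  rw [heq, Set.ncard_union_eq hdisj hS₁fin hS₂fin, Set.ncard_image_of_injOn hinj]
  have h1 : T₂.ncard ≤ ((fun C => C ∩ U₂) '' S₂).ncard :=
    Set.ncard_le_ncard hsurj (hS₂fin.image _)
  have h2 : ((fun C => C ∩ U₂) '' S₂).ncard ≤ S₂.ncard := Set.ncard_image_le hS₂fin
  omega
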